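/- For every ε > 0, every subset A of the unit sphere of c₀(ω₁) satisfying ‖x − y‖ ≥ 1 + ε for all distinct x, y ∈ A is countable. -/

import Mathlib

open ZeroAtInfty Cardinal

private lemma countable_of_injOn_aux {α β : Type*} {f : α → β} {s : Set α}
    (hinj : Set.InjOn f s) (h : (f '' s).Countable) : s.Countable := by
  rw [← Set.countable_coe_iff] at h ⊢
  exact Countable.of_equiv _ (Set.BijOn.equiv f hinj.bijOn_image).symm

/-- The Δ-system lemma for uncountable families of finite sets of fixed size. -/
private lemma delta_system_aux {α : Type*} [DecidableEq α] :
    ∀ (n : ℕ) (F : Set (Finset α)), (∀ S ∈ F, S.card = n) → ¬ F.Countable →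
    ∃ (R : Finset α) (F' : Set (Finset α)), F' ⊆ F ∧ ¬ F'.Countable ∧
      ∀ S ∈ F', ∀ T ∈ F', S ≠ T → S ∩ T = R := by
  intro n
  induction n with
  | zero =>
    intro F hcard hF
    exact absurd ((Set.countable_singleton (∅ : Finset α)).mono
      (fun S hS => by simp [Finset.card_eq_zero.mp (hcard S hS)])) hF
  | succ n ih =>
    intro F hcard hF
    by_cases hx : ∃ x : α, ¬ {S ∈ F | x ∈ S}.Countable
    · obtain ⟨x, hx⟩ := hx
      set G := (fun S => Finset.erase S x) '' {S ∈ F | x ∈ S} with hGdef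
      have hinj : Set.InjOn (fun S => Finset.erase S x) {S ∈ F | x ∈ S} := by
        intro S hS T hT h
        rw [← Finset.insert_erase hS.2, ← Finset.insert_erase hT.2]
        simp only at h
        rw [h]
      have hGcard : ∀ S ∈ G, S.card = n := by
        rintro _ ⟨S, ⟨hSF, hxS⟩, rfl⟩
        simp [Finset.card_erase_of_mem hxS, hcard S hSF]
      have hGunc : ¬ G.Countable := fun h => hx (countable_of_injOn_aux hinj h)
      obtain ⟨R, G', hG'G, hG'unc, hroot⟩ := ih G hGcard hGunc
      have hGnotmem : ∀ S ∈ G', x ∉ S := by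
        intro S hS
        obtain ⟨T, _, rfl⟩ := hG'G hS
        exact Finset.notMem_erase x T
      refine ⟨insert x R, insert x '' G', ?_, ?_, ?_⟩
      · rintro _ ⟨S, hS, rfl⟩
        obtain ⟨T, ⟨hTF, hxT⟩, rfl⟩ := hG'G hS
        rwa [Finset.insert_erase hxT]
      · intro h
        apply hG'unc
        have : G' ⊆ (fun S => Finset.erase S x) '' (insert x '' G') := by
          intro S hS
          exact ⟨insert x S, ⟨S, hS, rfl⟩, Finset.erase_insert (hGnotmem S hS)⟩
        exact (h.image _).mono this
      · rintro _ ⟨S, hS, rfl⟩ _ ⟨T, hT, rfl⟩ hne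
        have hST : S ≠ T := fun h => hne (by rw [h])
        have : S ∩ T = R := hroot S hS T hT hST
        ext y
        simp only [Finset.mem_inter, Finset.mem_insert]
        constructor
        · rintro ⟨hy1 | hy1, hy2 | hy2⟩
          · exact Or.inl hy1
          · exact Or.inl hy1
          · exact Or.inl hy2
          · exact Or.inr (this ▸ Finset.mem_inter.mpr ⟨hy1, hy2⟩)
        · rintro (rfl | hy)
          · exact ⟨Or.inl rfl, Or.inl rfl⟩
          · have := Finset.mem_inter.mp (this ▸ hy : y ∈ S ∩ T)
            exact ⟨Or.inr this.1, Or.inr this.2⟩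
    · push_neg at hx
      obtain ⟨M, hM⟩ := zorn_subset
        {M : Set (Finset α) | M ⊆ F ∧ M.Pairwise (fun S T => S ∩ T = ∅)} (by
          intro c hc hchain
          refine ⟨⋃₀ c, ⟨?_, ?_⟩, fun s hs => Set.subset_sUnion_of_mem hs⟩
          · exact Set.sUnion_subset fun M hM => (hc hM).1
          · intro S hS T hT hne
            obtain ⟨M₁, hM₁c, hSM₁⟩ := hS
            obtain ⟨M₂, hM₂c, hTM₂⟩ := hT
            rcases hchain.total hM₁c hM₂c with h | h
            · exact (hc hM₂c).2 (h hSM₁) hTM₂ hne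
            · exact (hc hM₁c).2 hSM₁ (h hTM₂) hne)
      have hMunc : ¬ M.Countable := by
        intro hMc
        apply hF
        have hcover : F ⊆ ⋃ T ∈ M, ⋃ x ∈ T, {S ∈ F | x ∈ S} := by
          intro S hSF
          have hSne : S.Nonempty := Finset.card_pos.mp (by rw [hcard S hSF]; omega)
          by_cases hSM : S ∈ M
          · obtain ⟨x, hxS⟩ := hSne
            exact Set.mem_biUnion hSM (Set.mem_biUnion hxS ⟨hSF, hxS⟩)
          · have hins : insert S M ∉
                {M : Set (Finset α) | M ⊆ F ∧ M.Pairwise (fun S T => S ∩ T = ∅)} := by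
              intro h
              exact hSM (hM.2 h (Set.subset_insert S M) (Set.mem_insert S M))
            have : ¬ (insert S M).Pairwise (fun S T => S ∩ T = ∅) := by
              intro h
              exact hins ⟨Set.insert_subset hSF hM.1.1, h⟩
            rw [Set.pairwise_insert] at this
            push_neg at this
            obtain ⟨T, hTM, hTS, hbad⟩ := this hM.1.2
            have : S ∩ T ≠ ∅ ∨ T ∩ S ≠ ∅ := by
              by_contra hc; push_neg at hc
              exact Finset.nonempty_iff_ne_empty.mp (hbad hc.1) hc.2
            have hne : S ∩ T ≠ ∅ := by
              rcases this with h | h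
              · exact h
              · rwa [Finset.inter_comm] at h
            obtain ⟨x, hx⟩ := Finset.nonempty_iff_ne_empty.mpr hne
            have := Finset.mem_inter.mp hx
            exact Set.mem_biUnion hTM (Set.mem_biUnion this.2 ⟨hSF, this.1⟩)
        refine Set.Countable.mono hcover ?_
        exact hMc.biUnion fun T _ => T.countable_toSet.biUnion fun x _ => hx x
      exact ⟨∅, M, hM.1.1, hMunc, fun S hS T hT hne => hM.1.2 hS hT hne⟩

/-- For every `ε > 0`, every subset `A` of the unit sphere of `c₀(ω₁)`
(realised as `C₀(Γ, ℝ)` for a discrete space `Γ` of cardinality `ℵ₁`)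
satisfying `‖x − y‖ ≥ 1 + ε` for all distinct `x, y ∈ A` is countable. -/
theorem countable_of_one_plus_eps_separated_c0_omega1
    (Γ : Type*) [TopologicalSpace Γ] [DiscreteTopology Γ]
    (hΓ : #Γ = Cardinal.aleph 1)
    (ε : ℝ) (hε : 0 < ε) (A : Set C₀(Γ, ℝ))
    (hA : ∀ f ∈ A, ‖f‖ = 1)
    (hsep : ∀ f ∈ A, ∀ g ∈ A, f ≠ g → 1 + ε ≤ ‖f - g‖) :
    A.Countable := by
  classical
  by_contra hunc
  -- finiteness of super-level sets
  have hfin : ∀ f : C₀(Γ, ℝ), {γ | ε/2 ≤ |f γ|}.Finite := by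
    intro f
    have h := zero_at_infty (f : C₀(Γ, ℝ))
    have hmem : f ⁻¹' Metric.ball 0 (ε/2) ∈ Filter.cocompact Γ :=
      h (Metric.ball_mem_nhds 0 (by positivity))
    obtain ⟨K, hK, hKsub⟩ := Filter.mem_cocompact.mp hmem
    refine hK.finite_of_discrete.subset fun γ hγ => ?_
    by_contra hγK
    have : f γ ∈ Metric.ball (0:ℝ) (ε/2) := hKsub hγK
    rw [Metric.mem_ball, Real.dist_eq, sub_zero] at this
    exact absurd hγ (not_le.mpr this)
  have hfinP : ∀ f : C₀(Γ, ℝ), {γ | ε/2 ≤ f γ}.Finite := by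
    intro f
    refine (hfin f).subset fun γ hγ => ?_
    simp only [Set.mem_setOf_eq] at *
    exact hγ.trans (le_abs_self _)
  have hfinN : ∀ f : C₀(Γ, ℝ), {γ | f γ ≤ -(ε/2)}.Finite := by
    intro f
    refine (hfin f).subset fun γ hγ => ?_
    simp only [Set.mem_setOf_eq] at *
    exact le_abs.mpr (Or.inr (by linarith))
  set P : C₀(Γ, ℝ) → Finset Γ := fun f => (hfinP f).toFinset with hPdef
  set N : C₀(Γ, ℝ) → Finset Γ := fun f => (hfinN f).toFinset with hNdef
  have hmemP : ∀ f γ, γ ∈ P f ↔ ε/2 ≤ f γ := fun f γ => (hfinP f).mem_toFinset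
  have hmemN : ∀ f γ, γ ∈ N f ↔ f γ ≤ -(ε/2) := fun f γ => (hfinN f).mem_toFinset
  have hPN : ∀ f, P f ∩ N f = ∅ := by
    intro f
    rw [Finset.eq_empty_iff_forall_notMem]
    intro γ hγ
    obtain ⟨h1, h2⟩ := Finset.mem_inter.mp hγ
    rw [hmemP] at h1; rw [hmemN] at h2
    linarith
  -- pointwise bound on norms
  have habs : ∀ f ∈ A, ∀ γ, |f γ| ≤ 1 := by
    intro f hf γ
    have := BoundedContinuousFunction.norm_coe_le_norm
      (ZeroAtInftyContinuousMap.toBCF f) γ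
    rw [ZeroAtInftyContinuousMap.norm_toBCF_eq_norm, hA f hf] at this
    simpa [Real.norm_eq_abs] using this
  -- the key analytic fact
  have key : ∀ f ∈ A, ∀ g ∈ A, P f ∩ N g = ∅ → N f ∩ P g = ∅ → f = g := by
    intro f hf g hg h1 h2
    by_contra hne
    have hbig := hsep f hf g hg hne
    have hnorm : ‖f - g‖ ≤ 1 + ε/2 := by
      rw [← ZeroAtInftyContinuousMap.norm_toBCF_eq_norm]
      refine (BoundedContinuousFunction.norm_le (by positivity)).mpr fun γ => ?_
      have hval : (ZeroAtInftyContinuousMap.toBCF (f - g)) γ = f γ - g γ := by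
        simp
      rw [hval, Real.norm_eq_abs]
      have hfb := abs_le.mp (habs f hf γ)
      have hgb := abs_le.mp (habs g hg γ)
      by_cases hf2 : ε/2 ≤ |f γ|
      · by_cases hg2 : ε/2 ≤ |g γ|
        · rcases le_abs.mp hf2 with hfp | hfn
          · -- γ ∈ P f, so γ ∉ N g
            have hγPf : γ ∈ P f := (hmemP f γ).mpr hfp
            have hγNg : γ ∉ N g := fun h =>
              Finset.eq_empty_iff_forall_notMem.mp h1 γ (Finset.mem_inter.mpr ⟨hγPf, h⟩)
            rw [hmemN] at hγNg
            push_neg at hγNg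
            have hgp : ε/2 ≤ g γ := by
              rcases le_abs.mp hg2 with h | h
              · exact h
              · linarith
            exact abs_le.mpr ⟨by linarith, by linarith⟩
          · -- γ ∈ N f, so γ ∉ P g
            have hγNf : γ ∈ N f := (hmemN f γ).mpr (by linarith)
            have hγPg : γ ∉ P g := fun h =>
              Finset.eq_empty_iff_forall_notMem.mp h2 γ (Finset.mem_inter.mpr ⟨hγNf, h⟩)
            rw [hmemP] at hγPg
            push_neg at hγPg
            have hgn : g γ ≤ -(ε/2) := by
              rcases le_abs.mp hg2 with h | h
              · linarith
              · linarith
            exact abs_le.mpr ⟨by linarith, by linarith⟩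
        · push_neg at hg2
          have := abs_lt.mp hg2
          exact abs_le.mpr ⟨by linarith, by linarith⟩
      · push_neg at hf2
        have := abs_lt.mp hf2
        exact abs_le.mpr ⟨by linarith, by linarith⟩
    linarith
  -- combinatorial part
  set Φ : C₀(Γ, ℝ) → Finset Γ × Finset Γ := fun f => (P f, N f) with hΦdef
  have hΦinj : Set.InjOn Φ A := by
    intro f hf g hg h
    apply key f hf g hg
    · rw [show N g = N f from (congrArg Prod.snd h).symm]
      exact hPN f
    · rw [show P g = P f from (congrArg Prod.fst h).symm, Finset.inter_comm]
      exact hPN f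
  -- D is uncountable
  have hD : ¬ (Φ '' A).Countable := fun h => hunc (countable_of_injOn_aux hΦinj h)
  set D := Φ '' A with hDdef
  have hDn : ∃ n : ℕ, ¬ {p ∈ D | (p.1 ∪ p.2).card = n}.Countable := by
    by_contra h
    push_neg at h
    apply hD
    have hsub : D ⊆ ⋃ n : ℕ, {p ∈ D | (p.1 ∪ p.2).card = n} :=
      fun p hp => Set.mem_iUnion.mpr ⟨_, hp, rfl⟩
    exact (Set.countable_iUnion h).mono hsub
  obtain ⟨n, hDn⟩ := hDn
  set Dn := {p ∈ D | (p.1 ∪ p.2).card = n} with hDndef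
  set u : Finset Γ × Finset Γ → Finset Γ := fun p => p.1 ∪ p.2 with hudef
  have hFunc : ¬ (u '' Dn).Countable := by
    intro h
    apply hDn
    have hcover : Dn ⊆ ⋃ S ∈ u '' Dn, {p ∈ Dn | u p = S} :=
      fun p hp => Set.mem_biUnion (Set.mem_image_of_mem u hp) ⟨hp, rfl⟩
    refine Set.Countable.mono hcover (h.biUnion fun S _ => ?_)
    have hfib : {p ∈ Dn | u p = S} ⊆ ↑(S.powerset ×ˢ S.powerset) := by
      rintro ⟨p1, p2⟩ ⟨_, hpu⟩
      simp only [Finset.coe_product, Set.mem_prod, Finset.mem_coe, Finset.mem_powerset]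
      constructor
      · exact hpu ▸ Finset.subset_union_left
      · exact hpu ▸ Finset.subset_union_right
    exact Set.Countable.mono hfib (S.powerset ×ˢ S.powerset).countable_toSet
  have hcardF : ∀ S ∈ u '' Dn, S.card = n := by
    rintro _ ⟨p, hp, rfl⟩
    exact hp.2
  obtain ⟨R, F', hF'sub, hF'unc, hroot⟩ := delta_system_aux n (u '' Dn) hcardF hFunc
  have hsel : ∀ S ∈ F', ∃ p, p ∈ Dn ∧ u p = S := by
    intro S hS
    obtain ⟨p, hp, hup⟩ := hF'sub hS
    exact ⟨p, hp, hup⟩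
  choose! ρ hρ1 hρ2 using hsel
  set θ : Finset Γ → Finset Γ × Finset Γ := fun S => ((ρ S).1 ∩ R, (ρ S).2 ∩ R) with hθdef
  have hθnotinj : ¬ Set.InjOn θ F' := by
    intro h
    apply hF'unc
    apply countable_of_injOn_aux h
    refine Set.Countable.mono ?_ (R.powerset ×ˢ R.powerset).countable_toSet
    rintro _ ⟨S, _, rfl⟩
    simp only [Finset.coe_product, Set.mem_prod, Finset.mem_coe, Finset.mem_powerset, hθdef]
    exact ⟨Finset.inter_subset_right, Finset.inter_subset_right⟩
  rw [Set.InjOn] at hθnotinj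
  push_neg at hθnotinj
  obtain ⟨S, hS, T, hT, hθeq, hST⟩ := hθnotinj
  have hpS := hρ1 S hS
  have hpT := hρ1 T hT
  obtain ⟨f, hfA, hΦf⟩ := hpS.1
  obtain ⟨g, hgA, hΦg⟩ := hpT.1
  have hPf : P f = (ρ S).1 := congrArg Prod.fst hΦf
  have hNf : N f = (ρ S).2 := congrArg Prod.snd hΦf
  have hPg : P g = (ρ T).1 := congrArg Prod.fst hΦg
  have hNg : N g = (ρ T).2 := congrArg Prod.snd hΦg
  have hfg : f ≠ g := by
    intro h
    apply hST
    have hρeq : ρ S = ρ T := by rw [← hΦf, ← hΦg, h]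
    rw [← hρ2 S hS, ← hρ2 T hT, hρeq]
  have hSiT : S ∩ T = R := hroot S hS T hT hST
  have hθ1 : (ρ S).1 ∩ R = (ρ T).1 ∩ R := congrArg Prod.fst hθeq
  have hθ2 : (ρ S).2 ∩ R = (ρ T).2 ∩ R := congrArg Prod.snd hθeq
  have hγS : ∀ γ, γ ∈ (ρ S).1 ∨ γ ∈ (ρ S).2 → γ ∈ S := by
    intro γ hγ
    rw [← hρ2 S hS]
    rcases hγ with h | h
    · exact Finset.mem_union_left _ h
    · exact Finset.mem_union_right _ h
  have hγT : ∀ γ, γ ∈ (ρ T).1 ∨ γ ∈ (ρ T).2 → γ ∈ T := by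
    intro γ hγ
    rw [← hρ2 T hT]
    rcases hγ with h | h
    · exact Finset.mem_union_left _ h
    · exact Finset.mem_union_right _ h
  have hd1 : P f ∩ N g = ∅ := by
    rw [Finset.eq_empty_iff_forall_notMem]
    intro γ hγ
    obtain ⟨h1, h2⟩ := Finset.mem_inter.mp hγ
    rw [hPf] at h1
    rw [hNg] at h2
    have hγR : γ ∈ R := by
      rw [← hSiT]
      exact Finset.mem_inter.mpr ⟨hγS γ (Or.inl h1), hγT γ (Or.inr h2)⟩
    have h3 : γ ∈ (ρ T).2 ∩ R := Finset.mem_inter.mpr ⟨h2, hγR⟩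
    rw [← hθ2] at h3
    have h4 : γ ∈ P f ∩ N f := by
      rw [hPf, hNf]
      exact Finset.mem_inter.mpr ⟨h1, (Finset.mem_inter.mp h3).1⟩
    rw [hPN f] at h4
    exact Finset.notMem_empty γ h4
  have hd2 : N f ∩ P g = ∅ := by
    rw [Finset.eq_empty_iff_forall_notMem]
    intro γ hγ
    obtain ⟨h1, h2⟩ := Finset.mem_inter.mp hγ
    rw [hNf] at h1
    rw [hPg] at h2
    have hγR : γ ∈ R := by
      rw [← hSiT]
      exact Finset.mem_inter.mpr ⟨hγS γ (Or.inr h1), hγT γ (Or.inl h2)⟩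
    have h3 : γ ∈ (ρ T).1 ∩ R := Finset.mem_inter.mpr ⟨h2, hγR⟩
    rw [← hθ1] at h3
    have h4 : γ ∈ P f ∩ N f := by
      rw [hPf, hNf]
      exact Finset.mem_inter.mpr ⟨(Finset.mem_inter.mp h3).1, h1⟩
    rw [hPN f] at h4
    exact Finset.notMem_empty γ h4
  exact hfg (key f hfA g hgA hd1 hd2)
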